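/- Let B > 0 and let η₂,...,η₈ be complex numbers. If |η₂η₃η₄η₅η₆η₇η₈| ≤ B and |η₃η₄η₅η₆η₇(η₄η₅³η₆²η₇ + η₂η₈)| ≤ B, then |η₃η₄²η₅⁴η₆³η₇²| ≤ 4B. -/

import Mathlib

theorem stmt0 (B : ℝ) (hB : 0 < B) (η₂ η₃ η₄ η₅ η₆ η₇ η₈ : ℂ)
    (h1 : ‖η₂ * η₃ * η₄ * η₅ * η₆ * η₇ * η₈‖^2 ≤ B)
    (h2 : ‖η₃ * η₄ * η₅ * η₆ * η₇ * (η₄ * η₅^3 * η₆^2 * η₇ + η₂ * η₈)‖^2 ≤ B) :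
    ‖η₃ * η₄^2 * η₅^4 * η₆^3 * η₇^2‖^2 ≤ 4 * B := by
  set x := η₃ * η₄ * η₅ * η₆ * η₇ * (η₄ * η₅^3 * η₆^2 * η₇ + η₂ * η₈) with hx
  set y := η₂ * η₃ * η₄ * η₅ * η₆ * η₇ * η₈ with hy
  have hkey : ‖η₃ * η₄^2 * η₅^4 * η₆^3 * η₇^2‖ ≤
      ‖x‖ + ‖y‖ := by
    have : η₃ * η₄^2 * η₅^4 * η₆^3 * η₇^2 = x - y := by rw [hx, hy]; ring
    rw [this]
    simpa [sub_eq_add_neg] using norm_add_le x (-y)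
  have h0 : 0 ≤ ‖η₃ * η₄^2 * η₅^4 * η₆^3 * η₇^2‖ := norm_nonneg _
  nlinarith [norm_nonneg x, norm_nonneg y, sq_nonneg (‖x‖ - ‖y‖)]
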